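/- Let μ > 0, r_0 > 0, R > 0 and define r_h := (16 μ r_0 R²)^{1/3}, assuming r_h < r_0. Then the function v : [0, r_0] → ℝ defined by v(r) = -(3/16) r³/R² + (2μ(r_0/r_h - 1) + r_h²/(16R²)) r for r ∈ [0, r_h] and v(r) = -2μ r - (r³ - r_h³)/(6R²) + 2μ r_0 log(r/r_h) for r ∈ [r_h, r_0] is continuously differentiable on (0, r_0), and satisfies v(r)/r ≥ -2μ for all r ∈ (0, r_h] and v(r)/r ≤ -2μ for all r ∈ [r_h, r_0]. -/

import Mathlib

set_option maxHeartbeats 1000000 in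
/-- the explicit minimizer `v = v_h^0` of the effective functional is
`C¹` on `(0, r₀)`, with `v(r)/r ≥ -2μ` on `(0, r_h]` and `v(r)/r ≤ -2μ` on `[r_h, r₀]`. -/
theorem explicit_minimizer_properties (μ r0 R : ℝ) (hμ : 0 < μ) (hr0 : 0 < r0) (hR : 0 < R)
    (rh : ℝ) (hrh : rh = (16 * μ * r0 * R ^ 2) ^ ((1:ℝ)/3)) (hlt : rh < r0)
    (v : ℝ → ℝ)
    (hv : ∀ r : ℝ, v r =
      if r ≤ rh then
        -(3/16) * r ^ 3 / R ^ 2 + (2 * μ * (r0 / rh - 1) + rh ^ 2 / (16 * R ^ 2)) * r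
      else
        -2 * μ * r - (r ^ 3 - rh ^ 3) / (6 * R ^ 2) + 2 * μ * r0 * Real.log (r / rh)) :
    ContDiffOn ℝ 1 v (Set.Ioo 0 r0) ∧
      (∀ r ∈ Set.Ioc (0:ℝ) rh, -2 * μ ≤ v r / r) ∧
      (∀ r ∈ Set.Icc rh r0, v r / r ≤ -2 * μ) := by
  have hbase : (0:ℝ) < 16 * μ * r0 * R ^ 2 := by positivity
  have hrhpos : 0 < rh := by rw [hrh]; positivity
  have hcube : rh ^ 3 = 16 * μ * r0 * R ^ 2 := by
    rw [hrh, ← Real.rpow_natCast ((16 * μ * r0 * R ^ 2) ^ ((1:ℝ)/3)) 3,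
      ← Real.rpow_mul hbase.le]
    norm_num
  set C : ℝ := 2 * μ * (r0 / rh - 1) + rh ^ 2 / (16 * R ^ 2) with hC
  -- the two pieces
  set v1 : ℝ → ℝ := fun r => -(3/16) * r ^ 3 / R ^ 2 + C * r with hv1def
  set v2 : ℝ → ℝ := fun r =>
    -2 * μ * r - (r ^ 3 - rh ^ 3) / (6 * R ^ 2) + 2 * μ * r0 * (Real.log r - Real.log rh)
      with hv2def
  have hvv1 : ∀ x, x ≤ rh → v x = v1 x := by
    intro x hx; rw [hv x, if_pos hx]
  have hcube4 : rh ^ 4 = 16 * μ * r0 * R ^ 2 * rh := by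
    rw [show rh ^ 4 = rh ^ 3 * rh by ring, hcube]
  have hmatch : v1 rh = v2 rh := by
    simp only [hv1def, hv2def, hC]
    field_simp
    ring_nf
    nlinarith [hcube, hcube4]
  have hvv2 : ∀ x, rh ≤ x → v x = v2 x := by
    intro x hx
    rcases eq_or_lt_of_le hx with h | h
    · rw [← h, hvv1 rh le_rfl, hmatch]
    · rw [hv x, if_neg (not_le.mpr h), Real.log_div (by linarith) hrhpos.ne']
  -- derivatives of the pieces
  have hd1 : ∀ x : ℝ, HasDerivAt v1 (-(9/16) * x ^ 2 / R ^ 2 + C) x := by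
    intro x
    have hp : HasDerivAt (fun y : ℝ => y ^ 3) (3 * x ^ 2) x := by
      simpa using hasDerivAt_pow 3 x
    have h0 := (hp.const_mul (-(3/16) / R ^ 2)).add ((hasDerivAt_id x).const_mul C)
    have h : HasDerivAt v1 (-(3/16) / R ^ 2 * (3 * x ^ 2) + C * 1) x :=
      h0.congr_of_eventuallyEq (Filter.Eventually.of_forall fun y => by
        simp only [hv1def, id_eq, Pi.add_apply]; ring)
    convert h using 1; ring
  have hd2 : ∀ x : ℝ, 0 < x →
      HasDerivAt v2 (-2 * μ - x ^ 2 / (2 * R ^ 2) + 2 * μ * r0 / x) x := by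
    intro x hx
    have hp : HasDerivAt (fun y : ℝ => y ^ 3) (3 * x ^ 2) x := by
      simpa using hasDerivAt_pow 3 x
    have hlog : HasDerivAt (fun y : ℝ => Real.log y - Real.log rh) (1 / x) x := by
      simpa [one_div] using (Real.hasDerivAt_log hx.ne').sub_const (Real.log rh)
    have h0 := (((hasDerivAt_id x).const_mul (-2 * μ)).sub
        ((hp.sub_const (rh ^ 3)).div_const (6 * R ^ 2))).add
        (hlog.const_mul (2 * μ * r0))
    have h : HasDerivAt v2 (-2 * μ * 1 - 3 * x ^ 2 / (6 * R ^ 2) + 2 * μ * r0 * (1 / x)) x :=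
      h0.congr_of_eventuallyEq (Filter.Eventually.of_forall fun y => by
        simp only [hv2def, id_eq, Pi.add_apply, Pi.sub_apply]; try ring)
    convert h using 1
    field_simp; ring
  -- matching of the derivatives at rh
  have hdermatch : -(9/16) * rh ^ 2 / R ^ 2 + C
      = -2 * μ - rh ^ 2 / (2 * R ^ 2) + 2 * μ * r0 / rh := by
    simp only [hC]
    field_simp
    ring
  -- candidate derivative
  set w : ℝ → ℝ := fun r =>
    if r ≤ rh then -(9/16) * r ^ 2 / R ^ 2 + C
    else -2 * μ - r ^ 2 / (2 * R ^ 2) + 2 * μ * r0 / r with hwdef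
  have hderiv : ∀ r ∈ Set.Ioo (0:ℝ) r0, HasDerivAt v (w r) r := by
    rintro r ⟨hrpos, hrlt⟩
    rcases lt_trichotomy r rh with h | h | h
    · have hw : w r = -(9/16) * r ^ 2 / R ^ 2 + C := if_pos h.le
      rw [hw]
      refine (hd1 r).congr_of_eventuallyEq ?_
      filter_upwards [Iio_mem_nhds h] with x hx
      exact hvv1 x (le_of_lt hx)
    · have hw : w r = -(9/16) * rh ^ 2 / R ^ 2 + C := by rw [h]; exact if_pos le_rfl
      subst h
      have h1 : HasDerivWithinAt v (-(9/16) * r ^ 2 / R ^ 2 + C) (Set.Iic r) r :=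
        (hd1 r).hasDerivWithinAt.congr (fun y hy => hvv1 y hy) (hvv1 r le_rfl)
      have h2 : HasDerivWithinAt v (-(9/16) * r ^ 2 / R ^ 2 + C) (Set.Ici r) r := by
        rw [hdermatch]
        exact ((hd2 r hrpos).hasDerivWithinAt).congr (fun y hy => hvv2 y hy) (hvv2 r le_rfl)
      have := h1.union h2
      rw [Set.Iic_union_Ici, hasDerivWithinAt_univ] at this
      rwa [hw]
    · have hw : w r = -2 * μ - r ^ 2 / (2 * R ^ 2) + 2 * μ * r0 / r := if_neg (not_le.mpr h)
      rw [hw]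
      refine (hd2 r hrpos).congr_of_eventuallyEq ?_
      filter_upwards [Ioi_mem_nhds h] with x hx
      exact hvv2 x (le_of_lt hx)
  have hopen : IsOpen (Set.Ioo (0:ℝ) r0) := isOpen_Ioo
  -- continuity of w
  have hwc : ContinuousOn w (Set.Ioo (0:ℝ) r0) := by
    have h1 : ContinuousOn (fun r : ℝ => -(9/16) * r ^ 2 / R ^ 2 + C)
        {x : ℝ | x ≤ rh} := (by fun_prop : Continuous fun r : ℝ =>
          -(9/16) * r ^ 2 / R ^ 2 + C).continuousOn
    have h2 : ContinuousOn (fun r : ℝ => -2 * μ - r ^ 2 / (2 * R ^ 2) + 2 * μ * r0 / r)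
        {x : ℝ | rh ≤ x} := by
      apply ContinuousOn.add
      · fun_prop
      · exact ContinuousOn.div continuousOn_const continuousOn_id
          (fun x hx => by exact ne_of_gt (lt_of_lt_of_le hrhpos hx))
    have : Continuous w := by
      rw [hwdef]
      exact continuous_if_le continuous_id continuous_const h1 h2
        (fun x hx => by rw [hx, hdermatch])
    exact this.continuousOn
  have hcd : ContDiffOn ℝ 1 v (Set.Ioo 0 r0) := by
    have h1 : (1 : WithTop ℕ∞) = 0 + 1 := by norm_num
    rw [h1, contDiffOn_succ_iff_deriv_of_isOpen hopen]
    refine ⟨fun r hr => (hderiv r hr).differentiableAt.differentiableWithinAt, by simp, ?_⟩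
    rw [contDiffOn_zero]
    exact hwc.congr fun r hr => (hderiv r hr).deriv
  refine ⟨hcd, ?_, ?_⟩
  · rintro r ⟨hrpos, hrle⟩
    rw [hv r, if_pos hrle, le_div_iff₀ hrpos]
    have hCval : C = -2 * μ + 3 * rh ^ 2 / (16 * R ^ 2) := by
      rw [hC]
      field_simp
      ring_nf
      nlinarith [hcube, hcube4]
    have h1 : 0 ≤ (rh ^ 2 - r ^ 2) * r := by
      apply mul_nonneg _ hrpos.le
      nlinarith [hrle, hrpos]
    have hre : -(3/16) * r ^ 3 / R ^ 2 + (-2 * μ + 3 * rh ^ 2 / (16 * R ^ 2)) * r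
        = -2 * μ * r + 3 * ((rh ^ 2 - r ^ 2) * r) / (16 * R ^ 2) := by
      field_simp; ring
    rw [hCval, hre]
    have h2 : 0 ≤ 3 * ((rh ^ 2 - r ^ 2) * r) / (16 * R ^ 2) :=
      div_nonneg (by linarith) (by positivity)
    linarith
  · rintro r ⟨hrle, hrle0⟩
    rcases eq_or_lt_of_le hrle with h | h
    · have hval : v rh = -2 * μ * rh := by
        rw [hvv2 rh le_rfl]
        simp [hv2def]
      rw [← h, hval, mul_div_assoc, div_self hrhpos.ne', mul_one]
    · have hrpos : 0 < r := lt_trans hrhpos h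
      rw [hv r, if_neg (not_le.mpr h), div_le_iff₀ hrpos]
      have hlog : Real.log (r / rh) ≤ r / rh - 1 :=
        Real.log_le_sub_one_of_pos (by positivity)
      have h1 : 2 * μ * r0 * Real.log (r / rh) ≤ 2 * μ * r0 * (r / rh - 1) :=
        mul_le_mul_of_nonneg_left hlog (by positivity)
      have h2u : 2 * μ * r0 = rh ^ 3 / (8 * R ^ 2) := by
        rw [eq_div_iff (by positivity)]
        linear_combination -hcube
      have h2 : 2 * μ * r0 * (r / rh - 1) = rh ^ 2 * (r - rh) / (8 * R ^ 2) := by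
        rw [h2u]; field_simp
      have hd0 : 0 ≤ r - rh := sub_nonneg.mpr h.le
      have h3 : rh ^ 2 * (r - rh) / (8 * R ^ 2) ≤ (r ^ 3 - rh ^ 3) / (6 * R ^ 2) := by
        rw [div_le_div_iff₀ (by positivity) (by positivity)]
        nlinarith [mul_nonneg (mul_nonneg (sq_nonneg R) hd0) (sq_nonneg r),
          mul_nonneg (mul_nonneg (sq_nonneg R) hd0) (mul_nonneg hrpos.le hrhpos.le),
          mul_nonneg (mul_nonneg (sq_nonneg R) hd0) (sq_nonneg rh)]
      linarith [h1, h2 ▸ h1, h3]
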